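/- arXiv:math/0110107 — 2 statements merged into one kernel-verified Lean document; each statement's English description precedes it below -/
import Mathlib

section
/- Let P be a convex subset (e.g., a convex polytope) in Euclidean space ℝⁿ, and let a ≥ 1, R > 0. The nearest-point projection from the boundary ∂N_{aR}(P) of the closed aR-neighborhood of P onto the boundary ∂N_R(P) of the closed R-neighborhood, given by x ↦ the point of [x₀, x] at distance R from P where x₀ is the projection of x onto P, is a bilipschitz map with respect to the induced length metrics, with bilipschitz constant depending only on a. -/
open Metric
open scoped ENNReal NNReal
open scoped RealInnerProductSpace

section aux
variable {E : Type*} [NormedAddCommGroup E] [InnerProductSpace ℝ E]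

lemma char_of_nearest' {P : Set E} (hP : Convex ℝ P) {x w : E} (hw : w ∈ P)
    (hd : dist x w = Metric.infDist x P) : ∀ q ∈ P, ⟪x - w, q - w⟫ ≤ 0 := by
  rw [← norm_eq_iInf_iff_real_inner_le_zero hP hw]
  rw [Metric.infDist_eq_iInf] at hd
  simpa [dist_eq_norm] using hd

lemma nearest_of_char' {P : Set E} {x w : E} (hw : w ∈ P)
    (h : ∀ q ∈ P, ⟪x - w, q - w⟫ ≤ 0) : dist x w = Metric.infDist x P := by
  refine le_antisymm ?_ (Metric.infDist_le_dist_of_mem hw)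
  rw [Metric.infDist_eq_iInf]
  have : Nonempty P := ⟨⟨w, hw⟩⟩
  refine le_ciInf fun ⟨y, hy⟩ => ?_
  have h2 : ‖x - w‖ ^ 2 ≤ ‖x - y‖ ^ 2 := by
    have hin := h y hy
    have e : x - y = (x - w) - (y - w) := by abel
    rw [e, norm_sub_sq_real (x - w) (y - w)]
    nlinarith [sq_nonneg ‖y - w‖]
  rw [dist_eq_norm, dist_eq_norm]
  nlinarith [norm_nonneg (x - w), norm_nonneg (x - y)]

lemma proj_dist_le' {x y w₁ w₂ : E}
    (h₁ : ⟪x - w₁, w₂ - w₁⟫ ≤ 0) (h₂ : ⟪y - w₂, w₁ - w₂⟫ ≤ 0) :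
    dist w₁ w₂ ≤ dist x y := by
  have h₂' : 0 ≤ ⟪y - w₂, w₂ - w₁⟫ := by
    have e : w₁ - w₂ = -(w₂ - w₁) := by abel
    rw [e, inner_neg_right] at h₂; linarith
  have h4 : ⟪y - x, w₂ - w₁⟫
      = ⟪y - w₂, w₂ - w₁⟫ - ⟪x - w₁, w₂ - w₁⟫ + ‖w₂ - w₁‖ ^ 2 := by
    have e : y - x = ((y - w₂) - (x - w₁)) + (w₂ - w₁) := by abel
    rw [e, inner_add_left, inner_sub_left, real_inner_self_eq_norm_sq]
  have key : ‖w₂ - w₁‖ ^ 2 ≤ ‖y - x‖ * ‖w₂ - w₁‖ := by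
    have h3 := real_inner_le_norm (y - x) (w₂ - w₁)
    linarith
  rw [dist_eq_norm, dist_eq_norm, norm_sub_rev w₁ w₂, norm_sub_rev x y]
  nlinarith [norm_nonneg (w₂ - w₁), norm_nonneg (y - x)]

end aux

/-- The length (intrinsic) metric on a subset `S` of a metric space: the infimum of
lengths of continuous paths joining `x` to `y` inside `S`. -/
noncomputable def lengthDist {E : Type*} [MetricSpace E] (S : Set E) (x y : E) : ℝ≥0∞ :=
  ⨅ (γ : ℝ → E) (_ : ContinuousOn γ (Set.Icc 0 1)) (_ : γ 0 = x) (_ : γ 1 = y)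
    (_ : ∀ t ∈ Set.Icc (0:ℝ) 1, γ t ∈ S), eVariationOn γ (Set.Icc 0 1)

/-- For a closed convex subset `P` of Euclidean space (of codimension at least 2, or
of codimension 1 and different from its affine span), the nearest-point projection of
`∂N_{aR}(P)` onto `∂N_R(P)` — sending `x` to the point of the segment `[x₀,x]` at
distance `R` from `P`, where `x₀` is the projection of `x` onto `P` — is bilipschitz
for the induced length metrics, with constant depending only on `a ≥ 1`. -/
theorem projection_boundary_neighborhoods_bilipschitz :
    ∀ a : ℝ, 1 ≤ a → ∃ K : ℝ≥0∞, 0 < K ∧ K < ⊤ ∧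
    ∀ (n : ℕ) (P : Set (EuclideanSpace ℝ (Fin n))),
      Convex ℝ P → IsClosed P → P.Nonempty →
      ((Module.finrank ℝ (affineSpan ℝ P).direction + 2 ≤ n) ∨
        (Module.finrank ℝ (affineSpan ℝ P).direction + 1 = n ∧
          P ≠ (affineSpan ℝ P : Set (EuclideanSpace ℝ (Fin n))))) →
      ∀ R : ℝ, 0 < R →
      ∀ p : EuclideanSpace ℝ (Fin n) → EuclideanSpace ℝ (Fin n),
        (∀ x, infDist x P = a * R →
          ∃ x₀ ∈ P, dist x x₀ = infDist x P ∧
            p x ∈ segment ℝ x₀ x ∧ infDist (p x) P = R) →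
        ∀ x y, infDist x P = a * R → infDist y P = a * R →
          lengthDist {z | infDist z P = R} (p x) (p y) ≤
              K * lengthDist {z | infDist z P = a * R} x y ∧
          lengthDist {z | infDist z P = a * R} x y ≤
              K * lengthDist {z | infDist z P = R} (p x) (p y) := by
  intro a ha
  have ha0 : (0:ℝ) < a := lt_of_lt_of_le one_pos ha
  set C : ℝ≥0 := Real.toNNReal (2 * a - 1) with hCdef
  have hCge : (1:ℝ≥0) ≤ C := by
    rw [hCdef, ← Real.toNNReal_one]
    exact (Real.toNNReal_le_toNNReal_iff (by linarith)).mpr (by linarith)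
  have hK0 : (C : ℝ≥0∞) ≠ 0 := by
    simp only [ne_eq, ENNReal.coe_eq_zero]
    intro h
    rw [h] at hCge
    exact (by norm_num : ¬((1:ℝ≥0) ≤ 0)) hCge
  have hKt : (C : ℝ≥0∞) ≠ ⊤ := ENNReal.coe_ne_top
  refine ⟨(C : ℝ≥0∞), pos_iff_ne_zero.mpr hK0, lt_top_iff_ne_top.mpr hKt, ?_⟩
  intro n P hPconv hPcl hPne _hcodim R hR p hp x y hx hy
  have hex : ∀ z : EuclideanSpace ℝ (Fin n), ∃ w ∈ P, infDist z P = dist z w :=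
    fun z => hPcl.exists_infDist_eq_dist hPne z
  choose f hfP hfd using hex
  have hcf : ∀ z : EuclideanSpace ℝ (Fin n), ∀ q ∈ P, ⟪z - f z, q - f z⟫ ≤ 0 :=
    fun z => char_of_nearest' hPconv (hfP z) (hfd z).symm
  -- structure of `p` on the outer sphere
  have key : ∀ z, infDist z P = a * R →
      f (p z) ∈ P ∧ dist z (f (p z)) = a * R ∧
      p z = f (p z) + (1/a) • (z - f (p z)) ∧
      infDist (p z) P = R ∧ (∀ q ∈ P, ⟪z - f (p z), q - f (p z)⟫ ≤ 0) := by
    intro z hz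
    obtain ⟨z₀, hz₀P, hz₀d, hseg, hpz⟩ := hp z hz
    obtain ⟨u, s, hu, hs, hus, hsum⟩ := hseg
    have hcz : ∀ q ∈ P, ⟪z - z₀, q - z₀⟫ ≤ 0 := char_of_nearest' hPconv hz₀P hz₀d
    have hpe : p z - z₀ = s • (z - z₀) := by
      have hu' : u = 1 - s := by linarith
      rw [← hsum, hu']; module
    have hcp : ∀ q ∈ P, ⟪p z - z₀, q - z₀⟫ ≤ 0 := by
      intro q hq
      rw [hpe, real_inner_smul_left]
      exact mul_nonpos_of_nonneg_of_nonpos hs (hcz q hq)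
    have hdz : dist (p z) z₀ = infDist (p z) P := nearest_of_char' hz₀P hcp
    have hdzR : dist (p z) z₀ = R := by rw [hdz, hpz]
    have hnz : dist z z₀ = a * R := by rw [hz₀d, hz]
    have hds : dist (p z) z₀ = s * (a * R) := by
      rw [dist_eq_norm, hpe, norm_smul, Real.norm_eq_abs, abs_of_nonneg hs,
        ← dist_eq_norm, hnz]
    have hs' : s = 1 / a := by
      have hsR : s * (a * R) = R := by rw [← hds, hdzR]
      field_simp
      nlinarith
    have hfz : f (p z) = z₀ := by
      have hle := proj_dist_le' (hcf (p z) z₀ hz₀P) (hcp (f (p z)) (hfP (p z)))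
      rw [dist_self] at hle
      exact dist_le_zero.mp hle
    rw [hfz]
    refine ⟨hz₀P, hnz, ?_, hpz, hcz⟩
    rw [← hs', ← hpe]
    abel
  -- `p` is 1-Lipschitz on the outer sphere
  have hpLip : LipschitzOnWith 1 p {z : EuclideanSpace ℝ (Fin n) | infDist z P = a * R} := by
    rw [lipschitzOnWith_iff_dist_le_mul]
    intro z hz w hw
    obtain ⟨hz₀P, hz₀d, hzf, -, hcz⟩ := key z hz
    obtain ⟨hw₀P, hw₀d, hwf, -, hcw⟩ := key w hw
    set z₀ := f (p z) with hz₀e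
    set w₀ := f (p w) with hw₀e
    have hdist0 : dist z₀ w₀ ≤ dist z w :=
      proj_dist_le' (hcz w₀ hw₀P) (hcw z₀ hz₀P)
    set b : ℝ := 1/a with hb
    have e : p z - p w = b • (z - w) + (1 - b) • (z₀ - w₀) := by
      rw [hzf, hwf]; module
    have h1a : (0:ℝ) ≤ b := by rw [hb]; positivity
    have h1a' : (0:ℝ) ≤ 1 - b := by
      have : b ≤ 1 := by rw [hb, div_le_one ha0]; exact ha
      linarith
    rw [NNReal.coe_one, one_mul, dist_eq_norm (p z) (p w), dist_eq_norm z w, e]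
    rw [dist_eq_norm, dist_eq_norm] at hdist0
    calc ‖b • (z - w) + (1 - b) • (z₀ - w₀)‖
        ≤ ‖b • (z - w)‖ + ‖(1 - b) • (z₀ - w₀)‖ := norm_add_le _ _
      _ = b * ‖z - w‖ + (1 - b) * ‖z₀ - w₀‖ := by
          rw [norm_smul, norm_smul, Real.norm_eq_abs, Real.norm_eq_abs,
            abs_of_nonneg h1a, abs_of_nonneg h1a']
      _ ≤ b * ‖z - w‖ + (1 - b) * ‖z - w‖ := by nlinarith
      _ = ‖z - w‖ := by ring
  -- the inverse map `q`
  set q : EuclideanSpace ℝ (Fin n) → EuclideanSpace ℝ (Fin n) :=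
    fun z => f z + a • (z - f z) with hqdef
  have hqS : ∀ z : EuclideanSpace ℝ (Fin n), infDist z P = R → infDist (q z) P = a * R := by
    intro z hz
    have hqf : q z - f z = a • (z - f z) := by
      show f z + a • (z - f z) - f z = a • (z - f z); abel
    have hchar : ∀ w ∈ P, ⟪q z - f z, w - f z⟫ ≤ 0 := by
      intro w hw
      rw [hqf, real_inner_smul_left]
      exact mul_nonpos_of_nonneg_of_nonpos ha0.le (hcf z w hw)
    have hdq : dist (q z) (f z) = a * R := by
      rw [dist_eq_norm, hqf, norm_smul, Real.norm_eq_abs, abs_of_nonneg ha0.le,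
        ← dist_eq_norm, ← hfd z, hz]
    rw [← nearest_of_char' (hfP z) hchar, hdq]
  have hfLip : ∀ z w : EuclideanSpace ℝ (Fin n), dist (f z) (f w) ≤ dist z w :=
    fun z w => proj_dist_le' (hcf z (f w) (hfP w)) (hcf w (f z) (hfP z))
  have hCcoe : ((C : ℝ≥0) : ℝ) = 2 * a - 1 := Real.coe_toNNReal _ (by linarith)
  have hqLip : LipschitzOnWith C q {z : EuclideanSpace ℝ (Fin n) | infDist z P = R} := by
    rw [lipschitzOnWith_iff_dist_le_mul]
    intro z _ w _
    have e : q z - q w = a • (z - w) + (1 - a) • (f z - f w) := by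
      show f z + a • (z - f z) - (f w + a • (w - f w)) = _
      module
    rw [hCcoe, dist_eq_norm (q z) (q w), dist_eq_norm z w, e]
    have hfd' := hfLip z w
    rw [dist_eq_norm, dist_eq_norm] at hfd'
    calc ‖a • (z - w) + (1 - a) • (f z - f w)‖
        ≤ ‖a • (z - w)‖ + ‖(1 - a) • (f z - f w)‖ := norm_add_le _ _
      _ = a * ‖z - w‖ + (a - 1) * ‖f z - f w‖ := by
          rw [norm_smul, norm_smul, Real.norm_eq_abs, Real.norm_eq_abs,
            abs_of_nonneg ha0.le, abs_of_nonpos (by linarith : 1 - a ≤ 0)]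
          ring
      _ ≤ (2 * a - 1) * ‖z - w‖ := by nlinarith [norm_nonneg (z - w)]
  have hqp : ∀ z, infDist z P = a * R → q (p z) = z := by
    intro z hz
    obtain ⟨-, -, hzf, -, -⟩ := key z hz
    set z₀ := f (p z) with hz₀
    have ha' : a * (1/a) = 1 := by field_simp
    show z₀ + a • (p z - z₀) = z
    rw [hzf]
    have e : z₀ + (1/a) • (z - z₀) - z₀ = (1/a) • (z - z₀) := by abel
    rw [e, smul_smul, ha', one_smul]
    abel
  constructor
  · -- forward inequality
    have hle : lengthDist {z : EuclideanSpace ℝ (Fin n) | infDist z P = R} (p x) (p y)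
        ≤ lengthDist {z : EuclideanSpace ℝ (Fin n) | infDist z P = a * R} x y := by
      simp only [lengthDist]
      refine le_iInf fun γ => le_iInf fun hγc => le_iInf fun hγ0 => le_iInf fun hγ1 =>
        le_iInf fun hγm => ?_
      have hmaps : Set.MapsTo γ (Set.Icc 0 1)
          {z : EuclideanSpace ℝ (Fin n) | infDist z P = a * R} := fun t ht => hγm t ht
      refine iInf_le_of_le (p ∘ γ) (iInf_le_of_le ?_ (iInf_le_of_le ?_ (iInf_le_of_le ?_
        (iInf_le_of_le ?_ ?_))))
      · exact hpLip.continuousOn.comp hγc hmaps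
      · show p (γ 0) = p x; rw [hγ0]
      · show p (γ 1) = p y; rw [hγ1]
      · intro t ht
        exact (key (γ t) (hγm t ht)).2.2.2.1
      · calc eVariationOn (p ∘ γ) (Set.Icc 0 1)
            ≤ ((1:ℝ≥0) : ℝ≥0∞) * eVariationOn γ (Set.Icc 0 1) :=
              hpLip.comp_eVariationOn_le hmaps
          _ = eVariationOn γ (Set.Icc 0 1) := by rw [ENNReal.coe_one, one_mul]
    calc lengthDist {z : EuclideanSpace ℝ (Fin n) | infDist z P = R} (p x) (p y)
        ≤ lengthDist {z : EuclideanSpace ℝ (Fin n) | infDist z P = a * R} x y := hle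
      _ ≤ (C : ℝ≥0∞) * lengthDist {z : EuclideanSpace ℝ (Fin n) | infDist z P = a * R} x y :=
          le_mul_of_one_le_left zero_le (by exact_mod_cast hCge)
  · -- backward inequality
    simp only [lengthDist]
    simp only [ENNReal.mul_iInf_of_ne hK0 hKt]
    refine le_iInf fun δ => le_iInf fun hδc => le_iInf fun hδ0 => le_iInf fun hδ1 =>
      le_iInf fun hδm => ?_
    have hmaps : Set.MapsTo δ (Set.Icc 0 1)
        {z : EuclideanSpace ℝ (Fin n) | infDist z P = R} := fun t ht => hδm t ht
    refine iInf_le_of_le (q ∘ δ) (iInf_le_of_le ?_ (iInf_le_of_le ?_ (iInf_le_of_le ?_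
      (iInf_le_of_le ?_ ?_))))
    · exact hqLip.continuousOn.comp hδc hmaps
    · show q (δ 0) = x; rw [hδ0]; exact hqp x hx
    · show q (δ 1) = y; rw [hδ1]; exact hqp y hy
    · intro t ht
      exact hqS (δ t) (hδm t ht)
    · exact hqLip.comp_eVariationOn_le hmaps
end

section
/- Let P be a convex polytope in ℝⁿ whose affine span Φ is a proper affine subspace, with P either of codimension at least 2, or of codimension 1 and a proper subset of Φ. Let R > 0, a ≥ 1, and let 𝔑 be a convex polytope with N_R(P) ⊆ 𝔑 ⊆ N_{aR}(P). Then the nearest-point projection of the boundary hypersurface ∂𝔑 onto ∂N_R(P) is bilipschitz with respect to the induced length metrics, with bilipschitz constant depending only on a. -/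
open Metric
open scoped ENNReal RealInnerProductSpace

/-- A convex polyhedron: an intersection of finitely many closed half-spaces. -/
def IsPolyhedron {n : ℕ} (P : Set (EuclideanSpace ℝ (Fin n))) : Prop :=
  ∃ (k : ℕ) (v : Fin k → EuclideanSpace ℝ (Fin n)) (c : Fin k → ℝ),
    P = {x | ∀ i, ⟪v i, x⟫ ≤ c i}

section Aux
set_option linter.unusedSectionVars false
variable {E : Type*} [NormedAddCommGroup E] [InnerProductSpace ℝ E]

lemma my_le_infDist {s : Set E} (hs : s.Nonempty) {x : E} {b : ℝ}
    (h : ∀ y ∈ s, b ≤ dist x y) : b ≤ infDist x s := by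
  by_contra hlt
  push_neg at hlt
  obtain ⟨y, hy, hdy⟩ := (infDist_lt_iff hs).1 hlt
  exact absurd (h y hy) (not_le.2 hdy)

/-- Uniqueness of the nearest point on a convex set. -/

lemma nearest_unique {C : Set E} (hC : Convex ℝ C) {z u u' : E}
    (hu : u ∈ C) (hu' : u' ∈ C) (h : dist z u = infDist z C)
    (h' : dist z u' = infDist z C) : u = u' := by
  have hm : (1/2 : ℝ) • u + (1/2 : ℝ) • u' ∈ C :=
    hC hu hu' (by norm_num) (by norm_num) (by norm_num)
  have hdm : infDist z C ≤ dist z ((1/2 : ℝ) • u + (1/2 : ℝ) • u') :=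
    infDist_le_dist_of_mem hm
  rw [← h] at hdm h'
  rw [dist_eq_norm z u] at hdm h'
  rw [dist_eq_norm] at hdm h'
  have hpar := parallelogram_law_with_norm ℝ (z - u) (z - u')
  have e1 : (z - u) + (z - u') = (2:ℝ) • (z - ((1/2 : ℝ) • u + (1/2 : ℝ) • u')) := by
    module
  have e2 : (z - u) - (z - u') = u' - u := by abel
  rw [e1, e2, norm_smul] at hpar
  have h2 : ‖z - ((1/2 : ℝ) • u + (1/2 : ℝ) • u')‖ ≥ ‖z - u‖ := hdm
  have hnn : (0:ℝ) ≤ ‖z - u‖ := norm_nonneg _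
  have hsq : ‖u' - u‖ = 0 := by
    have : ‖u' - u‖^2 ≤ 0 := by
      simp only [Real.norm_ofNat] at hpar
      nlinarith [norm_nonneg (u' - u), norm_nonneg (z - ((1/2 : ℝ) • u + (1/2 : ℝ) • u'))]
    nlinarith [norm_nonneg (u' - u)]
  have := norm_eq_zero.1 hsq
  have := sub_eq_zero.1 this
  exact this.symm

/-- Variational characterization of nearest points on convex sets. -/

lemma nearest_char {C : Set E} (hC : Convex ℝ C) {z u : E} (hu : u ∈ C)
    (h : dist z u = infDist z C) : ∀ w ∈ C, ⟪z - u, w - u⟫ ≤ 0 := by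
  intro w hw
  by_contra hpos
  push_neg at hpos
  have hwu : w - u ≠ 0 := by
    intro h0
    rw [h0, inner_zero_right] at hpos
    exact lt_irrefl _ hpos
  have hnw : (0:ℝ) < ‖w - u‖^2 := pow_pos (norm_pos_iff.2 hwu) 2
  set ε := ⟪z - u, w - u⟫ with hε
  set θ : ℝ := min 1 (ε / ‖w - u‖^2) with hθ
  have hθpos : 0 < θ := lt_min one_pos (div_pos hpos hnw)
  have hθ1 : θ ≤ 1 := min_le_left _ _
  have hθ2 : θ * ‖w - u‖^2 ≤ ε := by
    have := min_le_right 1 (ε / ‖w - u‖^2)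
    calc θ * ‖w - u‖^2 ≤ (ε / ‖w - u‖^2) * ‖w - u‖^2 := by
          apply mul_le_mul_of_nonneg_right this (le_of_lt hnw)
      _ = ε := by field_simp
  have hmem : u + θ • (w - u) ∈ C := by
    have : u + θ • (w - u) = (1 - θ) • u + θ • w := by module
    rw [this]
    exact hC hu hw (by linarith) (le_of_lt hθpos) (by ring)
  have hle : dist z u ≤ dist z (u + θ • (w - u)) := h ▸ infDist_le_dist_of_mem hmem
  rw [dist_eq_norm, dist_eq_norm] at hle
  have hexp : ‖z - (u + θ • (w - u))‖^2
      = ‖z - u‖^2 - 2 * θ * ε + θ^2 * ‖w - u‖^2 := by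
    have e : z - (u + θ • (w - u)) = (z - u) - θ • (w - u) := by abel
    rw [e, @norm_sub_sq_real, real_inner_smul_right, norm_smul, hε]
    simp [Real.norm_eq_abs, abs_of_pos hθpos, mul_pow]
    ring
  have hsq : ‖z - u‖^2 ≤ ‖z - (u + θ • (w - u))‖^2 := by
    have := norm_nonneg (z - u)
    nlinarith [norm_nonneg (z - (u + θ • (w - u)))]
  nlinarith [hθ2, hθpos, hpos, mul_le_mul_of_nonneg_left hθ2 (le_of_lt hθpos)]

/-- Nearest-point maps onto convex sets are 1-Lipschitz (pairwise form). -/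

lemma nearest_lipschitz {C : Set E} (hC : Convex ℝ C) {z z' u u' : E}
    (hu : u ∈ C) (hu' : u' ∈ C) (h : dist z u = infDist z C)
    (h' : dist z' u' = infDist z' C) : dist u u' ≤ dist z z' := by
  have i1 : ⟪z - u, u' - u⟫ ≤ 0 := nearest_char hC hu h u' hu'
  have i2 : ⟪z' - u', u - u'⟫ ≤ 0 := nearest_char hC hu' h' u hu
  have key : ‖u - u'‖^2 ≤ ⟪z - z', u - u'⟫ := by
    have e : ⟪z - z', u - u'⟫ = -⟪z - u, u' - u⟫ + ‖u - u'‖^2 - ⟪z' - u', u - u'⟫ := by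
      have e0 : z - z' = (z - u) + (u - u') + -(z' - u') := by abel
      rw [e0, inner_add_left, inner_add_left, inner_neg_left, real_inner_self_eq_norm_sq]
      have h2 : ⟪z - u, u - u'⟫ = -⟪z - u, u' - u⟫ := by
        rw [← inner_neg_right]; congr 1; abel
      rw [h2]; ring
    linarith
  have hcs : ⟪z - z', u - u'⟫ ≤ ‖z - z'‖ * ‖u - u'‖ := real_inner_le_norm _ _
  rw [dist_eq_norm, dist_eq_norm]
  rcases eq_or_lt_of_le (norm_nonneg (u - u')) with h0 | h0
  · rw [← h0]; exact norm_nonneg _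
  · nlinarith

lemma convex_infDist_le {P : Set E} (hP : Convex ℝ P) (hne : P.Nonempty) {R : ℝ} :
    Convex ℝ {z | infDist z P ≤ R} := by
  intro z hz z' hz' s t hs ht hst
  simp only [Set.mem_setOf_eq] at hz hz' ⊢
  refine le_of_forall_pos_le_add fun ε hε => ?_
  obtain ⟨p₁, hp₁, hd₁⟩ := (infDist_lt_iff hne).1 (lt_of_le_of_lt hz (by linarith : R < R + ε))
  obtain ⟨p₂, hp₂, hd₂⟩ := (infDist_lt_iff hne).1 (lt_of_le_of_lt hz' (by linarith : R < R + ε))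
  have hmem := hP hp₁ hp₂ hs ht hst
  have hdist : dist (s • z + t • z') (s • p₁ + t • p₂) ≤ s * dist z p₁ + t * dist z' p₂ := by
    rw [dist_eq_norm, dist_eq_norm, dist_eq_norm]
    have e : s • z + t • z' - (s • p₁ + t • p₂) = s • (z - p₁) + t • (z' - p₂) := by module
    rw [e]
    refine (norm_add_le _ _).trans ?_
    rw [norm_smul, norm_smul]
    simp [Real.norm_eq_abs, abs_of_nonneg hs, abs_of_nonneg ht]
  have := infDist_le_dist_of_mem (x := s • z + t • z') hmem
  nlinarith [dist_nonneg (x := z) (y := p₁), dist_nonneg (x := z') (y := p₂)]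

end Aux

section LD
variable {E : Type*} [MetricSpace E]

lemma lengthDist_le {T : Set E} {x' y' : E} (σ : ℝ → E) (h1 : ContinuousOn σ (Set.Icc 0 1))
    (h2 : σ 0 = x') (h3 : σ 1 = y') (h4 : ∀ t ∈ Set.Icc (0:ℝ) 1, σ t ∈ T) :
    lengthDist T x' y' ≤ eVariationOn σ (Set.Icc 0 1) := by
  rw [lengthDist]
  exact iInf_le_of_le σ (iInf_le_of_le h1 (iInf_le_of_le h2 (iInf_le_of_le h3 (iInf_le _ h4))))

lemma lengthDist_le_mul {S T : Set E} {x y x' y' : E} {K : ℝ≥0∞}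
    (hK0 : K ≠ 0) (hKtop : K ≠ ⊤)
    (h : ∀ γ : ℝ → E, ContinuousOn γ (Set.Icc 0 1) → γ 0 = x → γ 1 = y →
      (∀ t ∈ Set.Icc (0:ℝ) 1, γ t ∈ S) →
      lengthDist T x' y' ≤ K * eVariationOn γ (Set.Icc 0 1)) :
    lengthDist T x' y' ≤ K * lengthDist S x y := by
  conv_rhs => rw [lengthDist]
  simp_rw [ENNReal.mul_iInf_of_ne hK0 hKtop]
  exact le_iInf fun γ => le_iInf fun h1 => le_iInf fun h2 => le_iInf fun h3 =>
    le_iInf fun h4 => h γ h1 h2 h3 h4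

end LD

lemma IsPolyhedron.closed_convex {n : ℕ} {P : Set (EuclideanSpace ℝ (Fin n))}
    (h : IsPolyhedron P) : IsClosed P ∧ Convex ℝ P := by
  obtain ⟨k, v, c, rfl⟩ := h
  constructor
  · have he : {x : EuclideanSpace ℝ (Fin n) | ∀ i, ⟪v i, x⟫ ≤ c i}
        = ⋂ i, {x | ⟪v i, x⟫ ≤ c i} := by
      ext z; simp [Set.mem_iInter]
    rw [he]
    exact isClosed_iInter fun i =>
      isClosed_le (Continuous.inner continuous_const continuous_id) continuous_const
  · intro z hz z' hz' s t hs ht hst i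
    have h1 := hz i
    have h2 := hz' i
    have e : ⟪v i, s • z + t • z'⟫ = s * ⟪v i, z⟫ + t * ⟪v i, z'⟫ := by
      rw [inner_add_right, real_inner_smul_right, real_inner_smul_right]
    rw [e]
    have hc : s * c i + t * c i = c i := by rw [← add_mul, hst, one_mul]
    nlinarith [mul_le_mul_of_nonneg_left h1 hs, mul_le_mul_of_nonneg_left h2 ht]

set_option maxHeartbeats 2000000 in
/-- Let `P` be a convex polytope of codimension at least 2, or of codimension 1 and a
proper subset of its affine span, and let `𝔑` be a convex polytope with
`N_R(P) ⊆ 𝔑 ⊆ N_{aR}(P)`. Then the nearest-point projection of `∂𝔑` onto `∂N_R(P)`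
is bilipschitz for the induced length metrics, with constant depending only on `a`. -/
theorem projection_polytope_boundary_bilipschitz :
    ∀ a : ℝ, 1 ≤ a → ∃ K : ℝ≥0∞, 0 < K ∧ K < ⊤ ∧
    ∀ (n : ℕ) (P : Set (EuclideanSpace ℝ (Fin n))),
      IsPolyhedron P → P.Nonempty →
      ((Module.finrank ℝ (affineSpan ℝ P).direction + 2 ≤ n) ∨
        (Module.finrank ℝ (affineSpan ℝ P).direction + 1 = n ∧
          P ≠ (affineSpan ℝ P : Set (EuclideanSpace ℝ (Fin n))))) →
      ∀ R : ℝ, 0 < R →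
      ∀ N : Set (EuclideanSpace ℝ (Fin n)), IsPolyhedron N →
        {z | infDist z P ≤ R} ⊆ N → N ⊆ {z | infDist z P ≤ a * R} →
      ∀ p : EuclideanSpace ℝ (Fin n) → EuclideanSpace ℝ (Fin n),
        (∀ x ∈ frontier N, p x ∈ {z | infDist z P ≤ R} ∧
          dist x (p x) = infDist x {z | infDist z P ≤ R}) →
        ∀ x ∈ frontier N, ∀ y ∈ frontier N,
          lengthDist {z | infDist z P = R} (p x) (p y) ≤
              K * lengthDist (frontier N) x y ∧
          lengthDist (frontier N) x y ≤
              K * lengthDist {z | infDist z P = R} (p x) (p y) := by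
  intro a ha
  have h8a : (0:ℝ) < 8 * a ^ 2 := by nlinarith
  refine ⟨ENNReal.ofReal (8 * a ^ 2), ENNReal.ofReal_pos.2 h8a, ENNReal.ofReal_lt_top, ?_⟩
  intro n P hPpoly hPne _hcodim R hR N hNpoly hCN hNaR p hp x hx y hy
  obtain ⟨hPcl, hPconv⟩ := hPpoly.closed_convex
  obtain ⟨hNcl, hNconv⟩ := hNpoly.closed_convex
  set C : Set (EuclideanSpace ℝ (Fin n)) := {z | infDist z P ≤ R} with hCdef
  set S : Set (EuclideanSpace ℝ (Fin n)) := {z | infDist z P = R} with hSdef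
  have hCcl : IsClosed C := isClosed_le (continuous_infDist_pt P) continuous_const
  have hCconv : Convex ℝ C := convex_infDist_le hPconv hPne
  have hPC : P ⊆ C := fun q hq => by
    simp only [hCdef, Set.mem_setOf_eq, infDist_zero_of_mem hq]; exact le_of_lt hR
  have hCne : C.Nonempty := hPne.mono hPC
  have hNne : N.Nonempty := hCne.mono hCN
  have hSC : S ⊆ C := fun q hq => le_of_eq hq
  have hfrN : frontier N ⊆ N := hNcl.frontier_subset
  have hfr_ge : ∀ z ∈ frontier N, R ≤ infDist z P := by
    intro z hz
    by_contra hcon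
    push_neg at hcon
    have hopen : IsOpen {w : EuclideanSpace ℝ (Fin n) | infDist w P < R} :=
      isOpen_lt (continuous_infDist_pt P) continuous_const
    have hsub : {w : EuclideanSpace ℝ (Fin n) | infDist w P < R} ⊆ N :=
      fun w hw => hCN (show infDist w P ≤ R from le_of_lt hw)
    exact hz.2 (interior_maximal hsub hopen hcon)
  choose πP hπP₁ hπP₂ using fun z => hPcl.exists_infDist_eq_dist hPne z
  choose gC hgC₁ hgC₂ using fun z => hCcl.exists_infDist_eq_dist hCne z
  have hPchar : ∀ z : EuclideanSpace ℝ (Fin n), ∀ p' ∈ P, ⟪z - πP z, p' - πP z⟫ ≤ 0 :=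
    fun z => nearest_char hPconv (hπP₁ z) (hπP₂ z).symm
  have hgS : ∀ z : EuclideanSpace ℝ (Fin n), R ≤ infDist z P → gC z ∈ S := by
    intro z hzR
    rcases eq_or_lt_of_le hzR with heq | hlt
    · have hzC : z ∈ C := le_of_eq heq.symm
      have h0 : dist z (gC z) = 0 := by rw [← hgC₂ z]; exact infDist_zero_of_mem hzC
      have hze : z = gC z := dist_eq_zero.1 h0
      rw [← hze]
      exact heq.symm
    · have hCle : infDist (gC z) P ≤ R := hgC₁ z
      by_contra hnotS
      have hlt2 : infDist (gC z) P < R := lt_of_le_of_ne hCle hnotS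
      set u := gC z with hu
      set d := infDist z C with hd
      have hdzu : dist z u = d := (hgC₂ z).symm
      have hzC : z ∉ C := by
        simp only [hCdef, Set.mem_setOf_eq, not_le]
        exact hlt
      have hd0 : 0 < d := by
        rcases lt_or_eq_of_le (infDist_nonneg (x := z) (s := C)) with h | h
        · exact h
        · exfalso
          have : z ∈ closure C := (mem_closure_iff_infDist_zero hCne).2 h.symm
          rw [hCcl.closure_eq] at this
          exact hzC this
      set δ := R - infDist u P with hδ
      have hδ0 : 0 < δ := by simp only [hδ]; linarith
      set τ := min d δ with hτ
      have hτ0 : 0 < τ := lt_min hd0 hδ0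
      have hτd : τ ≤ d := min_le_left _ _
      set w := u + (τ / d) • (z - u) with hw
      have hzu : ‖z - u‖ = d := by rw [← dist_eq_norm]; exact hdzu
      have hwu : dist w u = τ := by
        rw [dist_eq_norm]
        have e : w - u = (τ / d) • (z - u) := by simp [hw]
        rw [e, norm_smul, Real.norm_eq_abs, abs_of_nonneg (by positivity), hzu]
        field_simp
      have hwC : w ∈ C := by
        simp only [hCdef, Set.mem_setOf_eq]
        have h1 : infDist w P ≤ infDist u P + dist w u := infDist_le_infDist_add_dist
        rw [hwu] at h1
        have : τ ≤ δ := min_le_right _ _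
        simp only [hδ] at this
        linarith
      have hzw : dist z w = d - τ := by
        rw [dist_eq_norm]
        have e : z - w = (1 - τ / d) • (z - u) := by
          simp only [hw]; module
        rw [e, norm_smul, Real.norm_eq_abs, hzu,
          abs_of_nonneg (by rw [sub_nonneg]; exact div_le_one_of_le₀ hτd (le_of_lt hd0))]
        field_simp
      have h2 : infDist z C ≤ dist z w := infDist_le_dist_of_mem hwC
      rw [hzw, ← hd] at h2
      linarith
  have hgp : ∀ z ∈ frontier N, gC z = p z := fun z hz =>
    nearest_unique hCconv (hgC₁ z) (hp z hz).1 (hgC₂ z).symm (hp z hz).2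
  have hglip : LipschitzWith 1 gC := by
    refine LipschitzWith.of_dist_le_mul fun z w => ?_
    rw [NNReal.coe_one, one_mul]
    exact nearest_lipschitz hCconv (hgC₁ z) (hgC₁ w) (hgC₂ z).symm (hgC₂ w).symm
  set ν : EuclideanSpace ℝ (Fin n) → EuclideanSpace ℝ (Fin n) :=
    fun q => R⁻¹ • (q - πP q) with hνdef
  have hqdist : ∀ q ∈ S, ‖q - πP q‖ = R := by
    intro q hq
    have hqR : infDist q P = R := hq
    rw [← dist_eq_norm, ← hπP₂ q, hqR]
  have hqrep : ∀ q ∈ S, q = πP q + R • ν q := by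
    intro q hq
    simp only [hνdef]
    rw [smul_smul, mul_inv_cancel₀ hR.ne', one_smul]
    abel
  have hν1 : ∀ q ∈ S, ‖ν q‖ = 1 := by
    intro q hq
    simp only [hνdef]
    rw [norm_smul, Real.norm_eq_abs, abs_of_pos (inv_pos.2 hR), hqdist q hq,
      inv_mul_cancel₀ hR.ne']
  have hν_inner : ∀ q ∈ S, ∀ p' ∈ P, R ≤ ⟪ν q, q - p'⟫ := by
    intro q hq p' hp'
    have e : ⟪ν q, q - p'⟫ = ⟪ν q, q - πP q⟫ + ⟪ν q, πP q - p'⟫ := by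
      rw [← inner_add_right]
      congr 1
      abel
    have e1 : ⟪ν q, q - πP q⟫ = R := by
      simp only [hνdef]
      rw [real_inner_smul_left, real_inner_self_eq_norm_sq, hqdist q hq]
      field_simp
    have e2 : (0:ℝ) ≤ ⟪ν q, πP q - p'⟫ := by
      simp only [hνdef]
      rw [real_inner_smul_left]
      have h3 := hPchar q p' hp'
      have h4 : ⟪q - πP q, πP q - p'⟫ = - ⟪q - πP q, p' - πP q⟫ := by
        rw [← inner_neg_right]
        congr 1
        abel
      rw [h4]
      have : (0:ℝ) ≤ R⁻¹ := le_of_lt (inv_pos.2 hR)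
      nlinarith
    linarith
  have hν_lip : ∀ q ∈ S, ∀ q' ∈ S, ‖ν q - ν q'‖ ≤ 2 / R * ‖q - q'‖ := by
    intro q hq q' hq'
    have e : ν q - ν q' = R⁻¹ • ((q - q') - (πP q - πP q')) := by
      simp only [hνdef]
      module
    rw [e, norm_smul, Real.norm_eq_abs, abs_of_pos (inv_pos.2 hR)]
    have h1 : ‖(q - q') - (πP q - πP q')‖ ≤ ‖q - q'‖ + ‖πP q - πP q'‖ := norm_sub_le _ _
    have h2 : ‖πP q - πP q'‖ ≤ ‖q - q'‖ := by
      rw [← dist_eq_norm, ← dist_eq_norm]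
      exact nearest_lipschitz hPconv (hπP₁ q) (hπP₁ q') (hπP₂ q).symm (hπP₂ q').symm
    have h3 : (0:ℝ) < R⁻¹ := inv_pos.2 hR
    rw [div_eq_mul_inv, mul_comm (2:ℝ) R⁻¹]
    nlinarith
  have hray : ∀ q ∈ S, ∀ t : ℝ, 0 ≤ t → R + t ≤ infDist (q + t • ν q) P := by
    intro q hq t ht
    refine my_le_infDist hPne fun p' hp' => ?_
    have hcs : ⟪ν q, q + t • ν q - p'⟫ ≤ ‖q + t • ν q - p'‖ := by
      have := real_inner_le_norm (ν q) (q + t • ν q - p')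
      rw [hν1 q hq, one_mul] at this
      exact this
    have e : ⟪ν q, q + t • ν q - p'⟫ = ⟪ν q, q - p'⟫ + t * ‖ν q‖^2 := by
      have e0 : q + t • ν q - p' = (q - p') + t • ν q := by abel
      rw [e0, inner_add_right, real_inner_smul_right, real_inner_self_eq_norm_sq]
    rw [dist_eq_norm]
    have h5 := hν_inner q hq p' hp'
    rw [hν1 q hq] at e
    nlinarith
  set T : EuclideanSpace ℝ (Fin n) → Set ℝ :=
    fun q => {t : ℝ | 0 ≤ t ∧ q + t • ν q ∈ N} with hTdef
  set tq : EuclideanSpace ℝ (Fin n) → ℝ := fun q => sSup (T q) with htqdef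
  set f : EuclideanSpace ℝ (Fin n) → EuclideanSpace ℝ (Fin n) :=
    fun q => q + tq q • ν q with hfdef
  have hT0 : ∀ q ∈ S, (0:ℝ) ∈ T q := by
    intro q hq
    refine ⟨le_refl 0, ?_⟩
    rw [zero_smul, add_zero]
    exact hCN (hSC hq)
  have hTbd : ∀ q ∈ S, ∀ t ∈ T q, t ≤ a * R - R := by
    intro q hq t ⟨ht0, htN⟩
    have h1 := hray q hq t ht0
    have h2 : infDist (q + t • ν q) P ≤ a * R := hNaR htN
    linarith
  have hTsup : ∀ q ∈ S, tq q ∈ T q := by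
    intro q hq
    have hcl : IsClosed (T q) := by
      have e : T q = Set.Ici (0:ℝ) ∩ (fun t : ℝ => q + t • ν q) ⁻¹' N := by
        ext t
        simp [hTdef, Set.mem_Ici]
      rw [e]
      exact isClosed_Ici.inter
        (hNcl.preimage (continuous_const.add (continuous_id.smul continuous_const)))
    exact hcl.csSup_mem ⟨0, hT0 q hq⟩ ⟨a * R - R, fun t ht => hTbd q hq t ht⟩
  have htq_le : ∀ q ∈ S, tq q ≤ a * R - R := fun q hq => hTbd q hq _ (hTsup q hq)
  have htq_nonneg : ∀ q ∈ S, 0 ≤ tq q := fun q hq => (hTsup q hq).1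
  have hfN : ∀ q ∈ S, f q ∈ N := fun q hq => (hTsup q hq).2
  have hbeyond : ∀ q ∈ S, ∀ t : ℝ, tq q < t → q + t • ν q ∉ N := by
    intro q hq t hlt htN
    have ht0 : 0 ≤ t := le_of_lt (lt_of_le_of_lt (htq_nonneg q hq) hlt)
    have : t ≤ tq q :=
      le_csSup ⟨a * R - R, fun s hs => hTbd q hq s hs⟩ ⟨ht0, htN⟩
    linarith
  have hf_frontier : ∀ q ∈ S, f q ∈ frontier N := by
    intro q hq
    constructor
    · exact subset_closure (hfN q hq)
    · intro hint
      obtain ⟨ε, hε0, hball⟩ := Metric.mem_nhds_iff.1 (mem_interior_iff_mem_nhds.1 hint)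
      have hmem : q + (tq q + ε / 2) • ν q ∈ N := by
        apply hball
        rw [Metric.mem_ball, dist_eq_norm]
        have e : q + (tq q + ε / 2) • ν q - f q = (ε / 2) • ν q := by
          simp only [hfdef]
          module
        rw [e, norm_smul, Real.norm_eq_abs, abs_of_pos (by linarith), hν1 q hq]
        linarith
      exact hbeyond q hq (tq q + ε / 2) (by linarith) hmem
  have hface : ∀ z ∈ frontier N, ∃ u : EuclideanSpace ℝ (Fin n), ∃ cu : ℝ,
      ‖u‖ = 1 ∧ (∀ w ∈ N, ⟪u, w⟫ ≤ cu) ∧ ⟪u, z⟫ = cu := by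
    intro z hz
    obtain ⟨k, v, c, hNrep⟩ := hNpoly
    obtain ⟨w₀, hw₀⟩ := hNne
    have hc_nonneg : ∀ i, v i = 0 → 0 ≤ c i := by
      intro i hvi
      have := (hNrep ▸ hw₀) i
      rwa [hvi, inner_zero_left] at this
    set O : Set (EuclideanSpace ℝ (Fin n)) := {w | ∀ i, v i ≠ 0 → ⟪v i, w⟫ < c i} with hOdef
    have hOopen : IsOpen O := by
      have e : O = ⋂ i, {w : EuclideanSpace ℝ (Fin n) | v i ≠ 0 → ⟪v i, w⟫ < c i} := by
        ext w
        simp [hOdef, Set.mem_iInter]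
      rw [e]
      refine isOpen_iInter_of_finite fun i => ?_
      by_cases hvi : v i = 0
      · simp only [hvi, ne_eq, not_true_eq_false, false_implies, Set.setOf_true]
        exact isOpen_univ
      · simp only [hvi, ne_eq, not_false_eq_true, true_implies]
        exact isOpen_lt (Continuous.inner continuous_const continuous_id) continuous_const
    have hOsub : O ⊆ N := by
      intro w hw
      rw [hNrep]
      intro i
      by_cases hvi : v i = 0
      · rw [hvi, inner_zero_left]
        exact hc_nonneg i hvi
      · exact le_of_lt (hw i hvi)
    have hzO : z ∉ O := fun hzO => hz.2 (interior_maximal hOsub hOopen hzO)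
    simp only [hOdef, Set.mem_setOf_eq, not_forall] at hzO
    obtain ⟨i, hvi, hge⟩ := hzO
    push_neg at hge
    have hzN : z ∈ N := hfrN hz
    have heq : ⟪v i, z⟫ = c i := le_antisymm ((hNrep ▸ hzN) i) hge
    refine ⟨‖v i‖⁻¹ • v i, ‖v i‖⁻¹ * c i, ?_, ?_, ?_⟩
    · rw [norm_smul, Real.norm_eq_abs, abs_of_pos (inv_pos.2 (norm_pos_iff.2 hvi)),
        inv_mul_cancel₀ (norm_ne_zero_iff.2 hvi)]
    · intro w hw
      rw [real_inner_smul_left]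
      exact mul_le_mul_of_nonneg_left ((hNrep ▸ hw) i) (inv_nonneg.2 (norm_nonneg _))
    · rw [real_inner_smul_left, heq]
  have hface_normal : ∀ q ∈ S, ∀ s : ℝ, 0 ≤ s →
      ∀ u : EuclideanSpace ℝ (Fin n), ∀ cu : ℝ, ‖u‖ = 1 → (∀ w ∈ N, ⟪u, w⟫ ≤ cu) →
      ⟪u, q + s • ν q⟫ = cu → R ≤ (R + s) * ⟪u, ν q⟫ := by
    intro q hq s hs u cu hu1 huN hueq
    have hπ : πP q ∈ P := hπP₁ q
    have hπRu : πP q + R • u ∈ N := by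
      apply hCN
      show infDist (πP q + R • u) P ≤ R
      have : dist (πP q + R • u) (πP q) = R := by
        rw [dist_eq_norm]
        have e : πP q + R • u - πP q = R • u := by abel
        rw [e, norm_smul, Real.norm_eq_abs, abs_of_pos hR, hu1, mul_one]
      calc infDist (πP q + R • u) P ≤ dist (πP q + R • u) (πP q) :=
            infDist_le_dist_of_mem hπ
        _ = R := this
    have h1 : ⟪u, πP q⟫ + R ≤ cu := by
      have := huN _ hπRu
      rw [inner_add_right, real_inner_smul_right, real_inner_self_eq_norm_sq, hu1] at this
      linarith [this]
    have h2 : q + s • ν q = πP q + (R + s) • ν q := by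
      nth_rewrite 1 [hqrep q hq]
      module
    rw [h2, inner_add_right, real_inner_smul_right] at hueq
    linarith
  have ht_onesided : ∀ q₁ ∈ S, ∀ q₂ ∈ S, tq q₂ - tq q₁ ≤ 4 * a ^ 2 * ‖q₁ - q₂‖ := by
    intro q₁ hq₁ q₂ hq₂
    have hδ0 : (0:ℝ) ≤ ‖q₁ - q₂‖ := norm_nonneg _
    rcases le_or_gt (tq q₂) (tq q₁) with hle | hlt
    · have : (0:ℝ) ≤ 4 * a ^ 2 * ‖q₁ - q₂‖ := by positivity
      linarith
    · obtain ⟨u, cu, hu1, huN, hueq⟩ := hface _ (hf_frontier q₁ hq₁)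
      simp only [hfdef] at hueq
      have hb1 : R ≤ (R + tq q₁) * ⟪u, ν q₁⟫ :=
        hface_normal q₁ hq₁ _ (htq_nonneg q₁ hq₁) u cu hu1 huN hueq
      have hfq₂ : ⟪u, q₂ + tq q₂ • ν q₂⟫ ≤ cu := huN _ (hfN q₂ hq₂)
      rw [inner_add_right, real_inner_smul_right] at hfq₂ hueq
      have hq12 : ⟪u, q₁⟫ - ⟪u, q₂⟫ ≤ ‖q₁ - q₂‖ := by
        have e : ⟪u, q₁⟫ - ⟪u, q₂⟫ = ⟪u, q₁ - q₂⟫ := (inner_sub_right u q₁ q₂).symm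
        have hcs := real_inner_le_norm u (q₁ - q₂)
        rw [hu1, one_mul] at hcs
        rw [e]
        exact hcs
      have hA : tq q₂ * ⟪u, ν q₂⟫ ≤ tq q₁ * ⟪u, ν q₁⟫ + ‖q₁ - q₂‖ := by linarith
      have ht1le : tq q₁ ≤ a * R - R := htq_le q₁ hq₁
      have ht10 : 0 ≤ tq q₁ := htq_nonneg q₁ hq₁
      have hpos1 : 0 < R + tq q₁ := by linarith
      have hF0 : 0 ≤ ⟪u, ν q₁⟫ := by nlinarith
      have hF1 : 1 ≤ a * ⟪u, ν q₁⟫ := by nlinarith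
      have hRAB : R * (⟪u, ν q₁⟫ - ⟪u, ν q₂⟫) ≤ 2 * ‖q₁ - q₂‖ := by
        have e : ⟪u, ν q₁⟫ - ⟪u, ν q₂⟫ = ⟪u, ν q₁ - ν q₂⟫ := (inner_sub_right _ _ _).symm
        have hcs := real_inner_le_norm u (ν q₁ - ν q₂)
        rw [hu1, one_mul] at hcs
        have h2 := hν_lip q₁ hq₁ q₂ hq₂
        have h3 : ⟪u, ν q₁⟫ - ⟪u, ν q₂⟫ ≤ 2 / R * ‖q₁ - q₂‖ := by
          rw [e]; exact hcs.trans h2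
        have h4 := mul_le_mul_of_nonneg_left h3 (le_of_lt hR)
        calc R * (⟪u, ν q₁⟫ - ⟪u, ν q₂⟫) ≤ R * (2 / R * ‖q₁ - q₂‖) := h4
          _ = 2 * ‖q₁ - q₂‖ := by field_simp
      rcases le_or_gt ‖q₁ - q₂‖ (R / (4 * a)) with hsmall | hbig
      · have ha0 : (0:ℝ) < a := by linarith
        have hRδ : 4 * a * ‖q₁ - q₂‖ ≤ R := by
          rw [le_div_iff₀ (by positivity)] at hsmall
          linarith [hsmall]
        have hF2 : 1 ≤ 2 * a * ⟪u, ν q₂⟫ := by nlinarith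
        have ht1AB : tq q₁ * (⟪u, ν q₁⟫ - ⟪u, ν q₂⟫) ≤ 2 * (a - 1) * ‖q₁ - q₂‖ := by
          have h5 := mul_le_mul_of_nonneg_left hRAB ht10
          nlinarith
        have hlt' : (0:ℝ) ≤ tq q₂ - tq q₁ := le_of_lt (sub_pos.2 hlt)
        nlinarith [mul_le_mul_of_nonneg_left hF2 hlt', hA, ht1AB]
      · have hRδ : R < 4 * a * ‖q₁ - q₂‖ := by
          rw [div_lt_iff₀ (by positivity)] at hbig
          linarith [hbig]
        have ht2le : tq q₂ ≤ a * R - R := htq_le q₂ hq₂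
        nlinarith [mul_le_mul_of_nonneg_left (le_of_lt hRδ) (sub_nonneg.2 ha)]
  have hf_lip : ∀ q₁ ∈ S, ∀ q₂ ∈ S, dist (f q₁) (f q₂) ≤ 8 * a ^ 2 * dist q₁ q₂ := by
    intro q₁ hq₁ q₂ hq₂
    have hδ0 : (0:ℝ) ≤ ‖q₁ - q₂‖ := norm_nonneg _
    have habs : |tq q₁ - tq q₂| ≤ 4 * a ^ 2 * ‖q₁ - q₂‖ := by
      rw [abs_sub_le_iff]
      constructor
      · have h1 := ht_onesided q₂ hq₂ q₁ hq₁
        rw [norm_sub_rev q₂ q₁] at h1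
        exact h1
      · exact ht_onesided q₁ hq₁ q₂ hq₂
    rw [dist_eq_norm, dist_eq_norm]
    have e : f q₁ - f q₂ = (q₁ - q₂) + ((tq q₁ - tq q₂) • ν q₁ + tq q₂ • (ν q₁ - ν q₂)) := by
      simp only [hfdef]
      module
    have h1 : ‖f q₁ - f q₂‖ ≤ ‖q₁ - q₂‖ + (‖(tq q₁ - tq q₂) • ν q₁‖ + ‖tq q₂ • (ν q₁ - ν q₂)‖) := by
      rw [e]
      exact (norm_add_le _ _).trans (add_le_add le_rfl (norm_add_le _ _))
    have h2 : ‖(tq q₁ - tq q₂) • ν q₁‖ = |tq q₁ - tq q₂| := by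
      rw [norm_smul, Real.norm_eq_abs, hν1 q₁ hq₁, mul_one]
    have h3 : ‖tq q₂ • (ν q₁ - ν q₂)‖ ≤ 2 * (a - 1) * ‖q₁ - q₂‖ := by
      rw [norm_smul, Real.norm_eq_abs, abs_of_nonneg (htq_nonneg q₂ hq₂)]
      have h4 := mul_le_mul_of_nonneg_left (hν_lip q₁ hq₁ q₂ hq₂) (htq_nonneg q₂ hq₂)
      have h5 : tq q₂ * (2 / R * ‖q₁ - q₂‖) ≤ (a * R - R) * (2 / R * ‖q₁ - q₂‖) :=
        mul_le_mul_of_nonneg_right (htq_le q₂ hq₂) (by positivity)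
      have h6 : (a * R - R) * (2 / R * ‖q₁ - q₂‖) = 2 * (a - 1) * ‖q₁ - q₂‖ := by
        field_simp
      linarith
    nlinarith [habs, h1, h2, h3, hδ0, mul_nonneg (sq_nonneg (2*a-1)) hδ0,
      mul_nonneg (by linarith : (0:ℝ) ≤ 2*a) hδ0]
  have hkey : ∀ z ∈ frontier N, p z ∈ S ∧ f (p z) = z := by
    intro z hz
    have hzR : R ≤ infDist z P := hfr_ge z hz
    have hzN : z ∈ N := hfrN hz
    obtain ⟨hq1, hq2⟩ := hp z hz
    rcases eq_or_lt_of_le hzR with heq | hlt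
    · -- z is already on the sphere: p z = z
      have hzC : z ∈ C := le_of_eq heq.symm
      have hd0 : dist z (p z) = 0 := by rw [hq2]; exact infDist_zero_of_mem hzC
      have hpz : p z = z := (dist_eq_zero.1 hd0).symm
      have hzS : z ∈ S := heq.symm
      refine ⟨by rw [hpz]; exact hzS, ?_⟩
      rw [hpz]
      obtain ⟨u, cu, hu1, huN, hueq⟩ := hface z hz
      have hueq' : ⟪u, z + (0:ℝ) • ν z⟫ = cu := by rw [zero_smul, add_zero]; exact hueq
      have hb := hface_normal z hzS 0 (le_refl 0) u cu hu1 huN hueq'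
      rw [add_zero] at hb
      have hpos : 0 < ⟪u, ν z⟫ := by nlinarith
      have hfzN : ⟪u, f z⟫ ≤ cu := huN _ (hfN z hzS)
      have hexp : ⟪u, f z⟫ = ⟪u, z⟫ + tq z * ⟪u, ν z⟫ := by
        simp only [hfdef]
        rw [inner_add_right, real_inner_smul_right]
      have htle : tq z ≤ 0 := by nlinarith [htq_nonneg z hzS]
      have ht0' : tq z = 0 := le_antisymm htle (htq_nonneg z hzS)
      simp only [hfdef]
      rw [ht0', zero_smul, add_zero]
    · -- z is strictly outside the sphere
      set d := infDist z P with hddef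
      have hd0 : 0 < d := lt_trans hR hlt
      have hwP : πP z ∈ P := hπP₁ z
      have hzw : ‖z - πP z‖ = d := by rw [← dist_eq_norm, ← hπP₂ z]
      set ω := d⁻¹ • (z - πP z) with hωdef
      have hω1 : ‖ω‖ = 1 := by
        rw [hωdef, norm_smul, Real.norm_eq_abs, abs_of_pos (inv_pos.2 hd0), hzw,
          inv_mul_cancel₀ hd0.ne']
      set u₀ := πP z + R • ω with hu₀def
      have hu₀w : dist u₀ (πP z) = R := by
        rw [dist_eq_norm]
        have e : u₀ - πP z = R • ω := by rw [hu₀def]; abel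
        rw [e, norm_smul, Real.norm_eq_abs, abs_of_pos hR, hω1, mul_one]
      have hu₀C : u₀ ∈ C := by
        show infDist u₀ P ≤ R
        calc infDist u₀ P ≤ dist u₀ (πP z) := infDist_le_dist_of_mem hwP
          _ = R := hu₀w
      have hzu₀ : dist z u₀ = d - R := by
        rw [dist_eq_norm]
        have e : z - u₀ = (1 - R * d⁻¹) • (z - πP z) := by
          rw [hu₀def, hωdef]
          module
        rw [e, norm_smul, Real.norm_eq_abs, hzw]
        rw [abs_of_nonneg]
        · field_simp
        · have : R * d⁻¹ ≤ 1 := by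
            rw [← div_eq_mul_inv, div_le_one hd0]
            exact le_of_lt hlt
          linarith
      have hlbC : ∀ w' ∈ C, d - R ≤ dist z w' := by
        intro w' hw'
        have h1 : infDist z P ≤ infDist w' P + dist z w' := infDist_le_infDist_add_dist
        have h2 : infDist w' P ≤ R := hw'
        rw [← hddef] at h1
        linarith
      have hinfC : infDist z C = d - R :=
        le_antisymm (by rw [← hzu₀]; exact infDist_le_dist_of_mem hu₀C)
          (my_le_infDist hCne hlbC)
      have hqeq : p z = u₀ := nearest_unique hCconv hq1 hu₀C hq2 (by rw [hzu₀, hinfC])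
      have hqS : p z ∈ S := by
        show infDist (p z) P = R
        refine le_antisymm hq1 ?_
        refine my_le_infDist hPne fun p' hp' => ?_
        have hcs : ⟪ω, p z - p'⟫ ≤ ‖p z - p'‖ := by
          have h := real_inner_le_norm ω (p z - p')
          rw [hω1, one_mul] at h
          exact h
        have he : ⟪ω, p z - p'⟫ = R + d⁻¹ * ⟪z - πP z, πP z - p'⟫ := by
          rw [hqeq, hu₀def]
          have e0 : πP z + R • ω - p' = R • ω + (πP z - p') := by abel
          rw [e0, inner_add_right, real_inner_smul_right, real_inner_self_eq_norm_sq, hω1]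
          rw [hωdef, real_inner_smul_left]
          ring
        have hch := hPchar z p' hp'
        have hch' : 0 ≤ ⟪z - πP z, πP z - p'⟫ := by
          have e1 : ⟪z - πP z, πP z - p'⟫ = -⟪z - πP z, p' - πP z⟫ := by
            rw [← inner_neg_right]
            congr 1
            abel
          rw [e1]
          linarith
        rw [dist_eq_norm]
        nlinarith [inv_pos.2 hd0]
      have hdistq : dist (p z) (πP z) = R := by rw [hqeq]; exact hu₀w
      have hπq : πP (p z) = πP z :=
        nearest_unique hPconv (hπP₁ (p z)) hwP (hπP₂ (p z)).symm
          (by rw [hdistq]; exact (show infDist (p z) P = R from hqS).symm)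
      have hνq : ν (p z) = ω := by
        simp only [hνdef]
        rw [hπq, hqeq, hu₀def]
        have e : πP z + R • ω - πP z = R • ω := by abel
        rw [e, smul_smul, inv_mul_cancel₀ hR.ne', one_smul]
      have hrep : z = p z + (d - R) • ν (p z) := by
        rw [hνq, hqeq, hu₀def, hωdef]
        have e2 : R • (d⁻¹ • (z - πP z)) + (d - R) • (d⁻¹ • (z - πP z)) = z - πP z := by
          rw [smul_smul, smul_smul, ← add_smul]
          have hco : R * d⁻¹ + (d - R) * d⁻¹ = 1 := by field_simp; ring
          rw [hco, one_smul]
        rw [add_assoc, e2]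
        abel
      have htqq : tq (p z) = d - R := by
        refine le_antisymm ?_ ?_
        · obtain ⟨u, cu, hu1, huN, hueq⟩ := hface z hz
          have hueq' : ⟪u, p z + (d - R) • ν (p z)⟫ = cu := by rw [← hrep]; exact hueq
          have hb := hface_normal (p z) hqS (d - R) (by linarith) u cu hu1 huN hueq'
          have hRd : R + (d - R) = d := by ring
          rw [hRd] at hb
          have hpos : 0 < ⟪u, ν (p z)⟫ := by nlinarith
          have hfqN : ⟪u, f (p z)⟫ ≤ cu := huN _ (hfN (p z) hqS)
          have hexp : ⟪u, f (p z)⟫ = ⟪u, p z⟫ + tq (p z) * ⟪u, ν (p z)⟫ := by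
            simp only [hfdef]
            rw [inner_add_right, real_inner_smul_right]
          have hexp2 : cu = ⟪u, p z⟫ + (d - R) * ⟪u, ν (p z)⟫ := by
            rw [← hueq', inner_add_right, real_inner_smul_right]
          nlinarith
        · refine le_csSup ⟨a * R - R, fun s hs => hTbd (p z) hqS s hs⟩ ?_
          exact ⟨by linarith, by rw [← hrep]; exact hzN⟩
      refine ⟨hqS, ?_⟩
      simp only [hfdef]
      rw [htqq, ← hrep]
  have hK0 : (ENNReal.ofReal (8 * a ^ 2)) ≠ 0 := (ENNReal.ofReal_pos.2 h8a).ne'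
  have hKtop : (ENNReal.ofReal (8 * a ^ 2)) ≠ ⊤ := ENNReal.ofReal_ne_top
  have hK1 : (1 : ℝ≥0∞) ≤ ENNReal.ofReal (8 * a ^ 2) := by
    rw [ENNReal.one_le_ofReal]; nlinarith
  constructor
  · -- contraction: project paths in frontier N to S via gC
    refine lengthDist_le_mul hK0 hKtop fun γ h1 h2 h3 h4 => ?_
    have hc : ContinuousOn (gC ∘ γ) (Set.Icc 0 1) :=
      hglip.continuous.comp_continuousOn h1
    have he0 : (gC ∘ γ) 0 = p x := by simp only [Function.comp_apply, h2]; exact hgp x hx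
    have he1 : (gC ∘ γ) 1 = p y := by simp only [Function.comp_apply, h3]; exact hgp y hy
    have hmem : ∀ t ∈ Set.Icc (0:ℝ) 1, (gC ∘ γ) t ∈ S :=
      fun t ht => hgS _ (hfr_ge _ (h4 t ht))
    refine (lengthDist_le _ hc he0 he1 hmem).trans ?_
    have := (hglip.lipschitzOnWith (s := Set.univ)).comp_eVariationOn_le
      (Set.mapsTo_univ γ (Set.Icc 0 1))
    refine this.trans ?_
    simp only [ENNReal.coe_one, one_mul]
    exact le_mul_of_one_le_left zero_le hK1
  · -- expansion: lift paths in S to frontier N via f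
    refine lengthDist_le_mul hK0 hKtop fun σ h1 h2 h3 h4 => ?_
    have hflipOn : LipschitzOnWith (Real.toNNReal (8 * a ^ 2)) f S := by
      refine LipschitzOnWith.of_dist_le_mul fun q hq q' hq' => ?_
      rw [Real.coe_toNNReal _ (le_of_lt h8a)]
      exact hf_lip q hq q' hq'
    have hmapsto : Set.MapsTo σ (Set.Icc 0 1) S := fun t ht => h4 t ht
    have hc : ContinuousOn (f ∘ σ) (Set.Icc 0 1) :=
      hflipOn.continuousOn.comp h1 hmapsto
    have he0 : (f ∘ σ) 0 = x := by
      simp only [Function.comp_apply, h2]; exact (hkey x hx).2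
    have he1 : (f ∘ σ) 1 = y := by
      simp only [Function.comp_apply, h3]; exact (hkey y hy).2
    have hmem : ∀ t ∈ Set.Icc (0:ℝ) 1, (f ∘ σ) t ∈ frontier N :=
      fun t ht => hf_frontier _ (h4 t ht)
    refine (lengthDist_le _ hc he0 he1 hmem).trans ?_
    refine (hflipOn.comp_eVariationOn_le hmapsto).trans ?_
    rw [ENNReal.ofReal]
end
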